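/- Let w : A → ℝ≥0 be nonnegative weights on A = C × U × B × Z, and let M_sched, M_hyb, M_sig be the maximum weights of independent sets of size k = |C|·|B|·|Z| in the scheduling-level conflict graph, the hybrid conflict graph, and the reduced (signal-level) conflict graph respectively, assuming each collection of size-k independent sets is nonempty. Then M_sched ≤ M_hyb ≤ M_sig. -/
import Mathlib


variable {C U B Z : Type*}

/-- Scheduling-level conflict graph adjacency. -/
def schedAdj (a a' : C × U × B × Z) : Prop :=
  a ≠ a' ∧ ((a.2.1 = a'.2.1 ∧ a.1 ≠ a'.1) ∨
    (a.1, a.2.2.1, a.2.2.2) = (a'.1, a'.2.2.1, a'.2.2.2) ∨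
    (a.2.1 = a'.2.1 ∧ a.2.2.1 ≠ a'.2.2.1))

/-- Hybrid conflict graph adjacency. -/
def hybAdj (a a' : C × U × B × Z) : Prop :=
  a ≠ a' ∧ ((a.2.1 = a'.2.1 ∧ a.1 ≠ a'.1) ∨
    (a.1, a.2.2.1, a.2.2.2) = (a'.1, a'.2.2.1, a'.2.2.2) ∨
    (a.2.1 = a'.2.1 ∧ a.2.2.2 = a'.2.2.2))

/-- Reduced (signal-level) conflict graph adjacency. -/
def sigAdj (a a' : C × U × B × Z) : Prop :=
  a ≠ a' ∧ ((a.1, a.2.2.1, a.2.2.2) = (a'.1, a'.2.2.1, a'.2.2.2) ∨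
    (a.2.1 = a'.2.1 ∧ a.2.2.2 = a'.2.2.2))

open scoped Classical in
theorem stmt18 [Fintype C] [Fintype U] [Fintype B] [Fintype Z]
    (w : C × U × B × Z → ℝ) (hw : ∀ a, 0 ≤ w a) (k : ℕ)
    (hk : k = Fintype.card C * Fintype.card B * Fintype.card Z)
    (hSched : (Finset.univ.filter (fun S : Finset (C × U × B × Z) =>
      (∀ a ∈ S, ∀ a' ∈ S, ¬ schedAdj a a') ∧ S.card = k)).Nonempty)
    (hHyb : (Finset.univ.filter (fun S : Finset (C × U × B × Z) =>
      (∀ a ∈ S, ∀ a' ∈ S, ¬ hybAdj a a') ∧ S.card = k)).Nonempty)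
    (hSig : (Finset.univ.filter (fun S : Finset (C × U × B × Z) =>
      (∀ a ∈ S, ∀ a' ∈ S, ¬ sigAdj a a') ∧ S.card = k)).Nonempty) :
    (Finset.univ.filter (fun S : Finset (C × U × B × Z) =>
      (∀ a ∈ S, ∀ a' ∈ S, ¬ schedAdj a a') ∧ S.card = k)).sup' hSched
        (fun S => ∑ a ∈ S, w a)
    ≤ (Finset.univ.filter (fun S : Finset (C × U × B × Z) =>
      (∀ a ∈ S, ∀ a' ∈ S, ¬ hybAdj a a') ∧ S.card = k)).sup' hHyb
        (fun S => ∑ a ∈ S, w a) ∧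
    (Finset.univ.filter (fun S : Finset (C × U × B × Z) =>
      (∀ a ∈ S, ∀ a' ∈ S, ¬ hybAdj a a') ∧ S.card = k)).sup' hHyb
        (fun S => ∑ a ∈ S, w a)
    ≤ (Finset.univ.filter (fun S : Finset (C × U × B × Z) =>
      (∀ a ∈ S, ∀ a' ∈ S, ¬ sigAdj a a') ∧ S.card = k)).sup' hSig
        (fun S => ∑ a ∈ S, w a) := by

  constructor
  · apply Finset.sup'_le
    intro S hS
    simp only [Finset.mem_filter] at hS
    refine Finset.le_sup' (fun S => ∑ a ∈ S, w a) ?_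
    simp only [Finset.mem_filter, Finset.mem_univ, true_and]
    refine ⟨fun a ha a' ha' hadj => hS.2.1 a ha a' ha' ?_, hS.2.2⟩
    obtain ⟨hne, h⟩ := hadj
    refine ⟨hne, ?_⟩
    rcases h with h | h | ⟨hu, hz⟩
    · exact Or.inl h
    · exact Or.inr (Or.inl h)
    · by_cases hc : a.1 = a'.1
      · by_cases hb : a.2.2.1 = a'.2.2.1
        · exact Or.inr (Or.inl (by rw [hc, hb, hz]))
        · exact Or.inr (Or.inr ⟨hu, hb⟩)
      · exact Or.inl ⟨hu, hc⟩
  · apply Finset.sup'_le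
    intro S hS
    simp only [Finset.mem_filter] at hS
    refine Finset.le_sup' (fun S => ∑ a ∈ S, w a) ?_
    simp only [Finset.mem_filter, Finset.mem_univ, true_and]
    refine ⟨fun a ha a' ha' hadj => hS.2.1 a ha a' ha' ?_, hS.2.2⟩
    exact ⟨hadj.1, Or.inr hadj.2⟩
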